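/- Let m ≥ 1 and let G be the cycle graph on the 2m+1 vertices ℤ/(2m+1)ℤ, with distinguished vertex s = 0, and for i ∈ {1,…,m} let F_i = {i, m+i} (so the cycle visits s, a_1 = 1, …, a_m = m, b_1 = m+1, …, b_m = 2m consecutively). Then the number of vertex sets C that are seclusion-maximal with respect to the property "s ∈ C, G[C] is connected, |N_G(C)| ≤ 2, and for no i ∈ {1,…,m} does C contain both elements of F_i" is at least m. -/

import Mathlib

open SimpleGraph

/-- The open neighborhood of a vertex set `C` in a graph `G`. -/
def openNbhd {V : Type} (G : SimpleGraph V) (C : Set V) : Set V :=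
  {v | v ∉ C ∧ ∃ u ∈ C, G.Adj u v}

/-- `C` is seclusion-maximal for property `Pr`: it satisfies `Pr` and every strict
superset satisfying `Pr` has a strictly larger open neighborhood. -/
def SeclusionMaximal {V : Type} (G : SimpleGraph V) (Pr : Set V → Prop) (C : Set V) : Prop :=
  Pr C ∧ ∀ C' : Set V, C ⊂ C' → Pr C' → (openNbhd G C).ncard < (openNbhd G C').ncard

/-- The cycle graph on `ℤ/nℤ`: `i` is adjacent to `i ± 1`. -/
def zmodCycle (n : ℕ) : SimpleGraph (ZMod n) where
  Adj i j := i ≠ j ∧ (i - j = 1 ∨ j - i = 1)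
  symm := ⟨fun i j h => ⟨h.1.symm, h.2.symm⟩⟩
  loopless := ⟨fun i h => h.1 rfl⟩

namespace Stmt14Aux

/-- The arc `{0,…,a} ∪ {m+a+1,…,2m}` on the `(2m+1)`-cycle. -/
def Ca (m a : ℕ) : Set (ZMod (2*m+1)) := {x | x.val ≤ a ∨ m + a + 1 ≤ x.val}

instance (m : ℕ) : NeZero (2*m+1) := ⟨Nat.succ_ne_zero _⟩

lemma val_cast (m k : ℕ) (hk : k < 2*m+1) : ((k : ZMod (2*m+1))).val = k :=
  ZMod.val_cast_of_lt hk

lemma cast_val (m : ℕ) (x : ZMod (2*m+1)) : ((x.val : ℕ) : ZMod (2*m+1)) = x :=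
  ZMod.natCast_rightInverse x

lemma mem_Ca (m a k : ℕ) (hk : k < 2*m+1) :
    ((k:ZMod (2*m+1)) ∈ Ca m a) ↔ (k ≤ a ∨ m+a+1 ≤ k) := by
  unfold Ca; rw [Set.mem_setOf_eq, val_cast m k hk]

lemma zero_mem_Ca (m a : ℕ) : (0 : ZMod (2*m+1)) ∈ Ca m a := by
  have := mem_Ca m a 0 (by omega)
  rw [Nat.cast_zero] at this
  exact this.mpr (by omega)

lemma adj_succ (m j : ℕ) (hj : j < 2*m) :
    (zmodCycle (2*m+1)).Adj ((j:ℕ) : ZMod (2*m+1)) (((j+1:ℕ)) : ZMod (2*m+1)) := by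
  constructor
  · intro h
    have := congrArg ZMod.val h
    rw [val_cast m j (by omega), val_cast m (j+1) (by omega)] at this
    omega
  · right; push_cast; ring

lemma adj_top (m : ℕ) (hm : 1 ≤ m) :
    (zmodCycle (2*m+1)).Adj (((2*m:ℕ)) : ZMod (2*m+1)) 0 := by
  have h0 : 2 * ((m:ℕ) : ZMod (2*m+1)) + 1 = 0 := by
    have := ZMod.natCast_self (2*m+1)
    push_cast at this
    linear_combination this
  constructor
  · intro h
    have := congrArg ZMod.val h
    rw [val_cast m (2*m) (by omega), ZMod.val_zero] at this
    omega
  · right; push_cast; linear_combination -h0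

/-- Any vertex outside `Ca` adjacent to a vertex inside `Ca` is `a+1` or `m+a`. -/
lemma boundary (m a : ℕ) (ha : a < m) {u v : ZMod (2*m+1)} (hu : u ∉ Ca m a)
    (hv : v ∈ Ca m a) (hadj : (zmodCycle (2*m+1)).Adj v u) :
    u = ((a+1 : ℕ) : ZMod (2*m+1)) ∨ u = ((m+a : ℕ) : ZMod (2*m+1)) := by
  haveI : Fact (1 < 2*m+1) := ⟨by omega⟩
  have hvval : v.val < 2*m+1 := ZMod.val_lt v
  have huval : u.val < 2*m+1 := ZMod.val_lt u
  have hvC : v.val ≤ a ∨ m+a+1 ≤ v.val := hv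
  have huC : ¬(u.val ≤ a ∨ m+a+1 ≤ u.val) := hu
  obtain ⟨hne, h | h⟩ := hadj
  · -- v - u = 1, so v = u + 1
    have hveq : v = u + 1 := by linear_combination h
    have : v.val = (u.val + 1) % (2*m+1) := by
      rw [hveq, ZMod.val_add, ZMod.val_one]
    rcases Nat.lt_or_ge u.val (2*m) with h2 | h2
    · rw [Nat.mod_eq_of_lt (by omega)] at this
      have : u.val = m + a := by omega
      right
      calc u = ((u.val : ℕ) : ZMod (2*m+1)) := (cast_val m u).symm
        _ = _ := by rw [this]
    · omega
  · -- u - v = 1, so u = v + 1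
    have hueq : u = v + 1 := by linear_combination h
    have : u.val = (v.val + 1) % (2*m+1) := by
      rw [hueq, ZMod.val_add, ZMod.val_one]
    rcases Nat.lt_or_ge v.val (2*m) with h2 | h2
    · rw [Nat.mod_eq_of_lt (by omega)] at this
      have : u.val = a + 1 := by omega
      left
      calc u = ((u.val : ℕ) : ZMod (2*m+1)) := (cast_val m u).symm
        _ = _ := by rw [this]
    · -- v.val = 2m, u = 0, contradiction since 0 ∈ Ca
      have hv2 : v.val = 2*m := by omega
      rw [hv2, Nat.mod_self] at this
      omega

lemma openNbhd_sub (m a : ℕ) (ha : a < m) :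
    openNbhd (zmodCycle (2*m+1)) (Ca m a) ⊆
      {((a+1 : ℕ) : ZMod (2*m+1)), ((m+a : ℕ) : ZMod (2*m+1))} := by
  rintro x ⟨hx, u, hu, hadj⟩
  exact boundary m a ha hx hu hadj

lemma reach_congr {V : Type} (G : SimpleGraph V) (x y : V) (h : x = y) : G.Reachable x y :=
  h ▸ Reachable.refl x

lemma reach_zero (m a : ℕ) (hm : 1 ≤ m) (ha : a < m) (x : (Ca m a : Set (ZMod (2*m+1)))) :
    ((zmodCycle (2*m+1)).induce (Ca m a)).Reachable x ⟨0, zero_mem_Ca m a⟩ := by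
  -- upward reachability
  have up : ∀ j (hj : j ≤ a),
      ((zmodCycle (2*m+1)).induce (Ca m a)).Reachable
        ⟨((j:ℕ) : ZMod (2*m+1)), (mem_Ca m a j (by omega)).mpr (Or.inl hj)⟩
        ⟨0, zero_mem_Ca m a⟩ := by
    intro j
    induction j with
    | zero =>
      intro _
      exact reach_congr _ _ _ (Subtype.ext (by norm_num))
    | succ k ih =>
      intro hj
      have hadj : ((zmodCycle (2*m+1)).induce (Ca m a)).Adj
          ⟨(((k+1):ℕ) : ZMod (2*m+1)), (mem_Ca m a (k+1) (by omega)).mpr (Or.inl hj)⟩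
          ⟨((k:ℕ) : ZMod (2*m+1)), (mem_Ca m a k (by omega)).mpr (Or.inl (by omega))⟩ :=
        (adj_succ m k (by omega)).symm
      exact hadj.reachable.trans (ih (by omega))
  have down : ∀ k (hk : k ≤ m - a - 1),
      ((zmodCycle (2*m+1)).induce (Ca m a)).Reachable
        ⟨(((2*m - k):ℕ) : ZMod (2*m+1)),
          (mem_Ca m a (2*m-k) (by omega)).mpr (Or.inr (by omega))⟩
        ⟨0, zero_mem_Ca m a⟩ := by
    intro k
    induction k with
    | zero =>
      intro _
      refine Adj.reachable ?_
      show (zmodCycle (2*m+1)).Adj (((2*m - 0 : ℕ)) : ZMod (2*m+1)) (0 : ZMod (2*m+1))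
      rw [Nat.sub_zero]
      exact adj_top m hm
    | succ k ih =>
      intro hk
      have hadj : ((zmodCycle (2*m+1)).induce (Ca m a)).Adj
          ⟨(((2*m - (k+1)):ℕ) : ZMod (2*m+1)),
            (mem_Ca m a (2*m-(k+1)) (by omega)).mpr (Or.inr (by omega))⟩
          ⟨(((2*m - k):ℕ) : ZMod (2*m+1)),
            (mem_Ca m a (2*m-k) (by omega)).mpr (Or.inr (by omega))⟩ := by
        have := adj_succ m (2*m - (k+1)) (by omega)
        rw [show 2*m - (k+1) + 1 = 2*m - k by omega] at this
        exact this
      exact hadj.reachable.trans (ih (by omega))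
  obtain ⟨x, hx⟩ := x
  rcases hx with hx | hx
  · have h := up x.val hx
    have he : (⟨((x.val : ℕ) : ZMod (2*m+1)),
        (mem_Ca m a x.val (by omega)).mpr (Or.inl hx)⟩ : ↑(Ca m a)) = ⟨x, Or.inl hx⟩ :=
      Subtype.ext (cast_val m x)
    exact (reach_congr _ _ _ he.symm).trans h
  · have hxv : x.val ≤ 2*m := by have := ZMod.val_lt x; omega
    have h := down (2*m - x.val) (by omega)
    have he : (⟨(((2*m - (2*m - x.val)):ℕ) : ZMod (2*m+1)),
        (mem_Ca m a (2*m - (2*m - x.val)) (by omega)).mpr (Or.inr (by omega))⟩ : ↑(Ca m a)) = ⟨x, Or.inr hx⟩ := by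
      refine Subtype.ext ?_
      show (((2*m - (2*m - x.val)):ℕ) : ZMod (2*m+1)) = x
      rw [show 2*m - (2*m - x.val) = x.val by omega]
      exact cast_val m x
    exact (reach_congr _ _ _ he.symm).trans h

lemma connected_Ca (m a : ℕ) (hm : 1 ≤ m) (ha : a < m) :
    ((zmodCycle (2*m+1)).induce (Ca m a)).Connected := by
  rw [connected_iff]
  refine ⟨fun x y => ?_, ⟨⟨0, zero_mem_Ca m a⟩⟩⟩
  exact (reach_zero m a hm ha x).trans (reach_zero m a hm ha y).symm

/-- On a walk in the induced graph from outside `D` to inside `D` there is a boundary edge. -/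
lemma walk_boundary {V : Type} {G : SimpleGraph V} {C' : Set V} (D : Set V) :
    ∀ {x z : C'}, (G.induce C').Walk x z → (x:V) ∉ D → (z:V) ∈ D →
    ∃ u v : V, u ∈ C' ∧ u ∉ D ∧ v ∈ D ∧ G.Adj v u := by
  intro x z w
  induction w with
  | nil => intro h1 h2; exact absurd h2 h1
  | @cons s t z hst p ih =>
    intro hx hz
    by_cases hmid : (t : V) ∈ D
    · exact ⟨s, t, s.2, hx, hmid, hst.symm⟩
    · exact ih hmid hz

def Pr (m : ℕ) : Set (ZMod (2*m+1)) → Prop := fun C =>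
  (0 : ZMod (2*m+1)) ∈ C ∧
  ((zmodCycle (2*m+1)).induce C).Connected ∧
  (openNbhd (zmodCycle (2*m+1)) C).ncard ≤ 2 ∧
  ∀ i ∈ Finset.Icc 1 m,
    ¬ (((i : ℕ) : ZMod (2*m+1)) ∈ C ∧ (((m + i : ℕ) : ZMod (2*m+1)) ∈ C))

lemma pr_Ca (m a : ℕ) (hm : 1 ≤ m) (ha : a < m) : Pr m (Ca m a) := by
  refine ⟨zero_mem_Ca m a, connected_Ca m a hm ha, ?_, ?_⟩
  · calc (openNbhd (zmodCycle (2*m+1)) (Ca m a)).ncard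
        ≤ ({((a+1 : ℕ) : ZMod (2*m+1)), ((m+a : ℕ) : ZMod (2*m+1))} : Set _).ncard :=
          Set.ncard_le_ncard (openNbhd_sub m a ha) (Set.toFinite _)
      _ ≤ 2 := by
          apply le_trans (Set.ncard_insert_le _ _)
          simp
  · rintro i hi ⟨h1, h2⟩
    rw [Finset.mem_Icc] at hi
    rw [mem_Ca m a i (by omega)] at h1
    rw [mem_Ca m a (m+i) (by omega)] at h2
    omega

/-- No strict superset of `Ca m a` satisfies the property. -/
lemma no_superset (m a : ℕ) (hm : 1 ≤ m) (ha : a < m) (C' : Set (ZMod (2*m+1)))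
    (hsub : Ca m a ⊂ C') (hPr : Pr m C') : False := by
  obtain ⟨h0, hconn, _, hpairs⟩ := hPr
  obtain ⟨hsub, hne⟩ := hsub
  obtain ⟨x, hxC', hxCa⟩ := Set.not_subset.mp hne
  -- walk from x to 0 in induce C'
  have hreach := hconn.preconnected ⟨x, hxC'⟩ ⟨0, h0⟩
  obtain ⟨w⟩ := hreach
  obtain ⟨u, v, huC', huCa, hvCa, hadj⟩ := walk_boundary (Ca m a) w hxCa (zero_mem_Ca m a)
  have := boundary m a ha huCa hvCa hadj
  rcases this with h | h
  · -- u = a+1; pair i = a+1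
    refine hpairs (a+1) (Finset.mem_Icc.mpr ⟨by omega, by omega⟩) ⟨?_, ?_⟩
    · rw [← h]; exact huC'
    · exact hsub ((mem_Ca m a (m+(a+1)) (by omega)).mpr (Or.inr (by omega)))
  · rcases Nat.eq_zero_or_pos a with rfl | hapos
    · -- u = m; pair i = m
      refine hpairs m (Finset.mem_Icc.mpr ⟨hm, le_refl m⟩) ⟨?_, ?_⟩
      · rw [show ((m:ℕ) : ZMod (2*m+1)) = ((m+0:ℕ) : ZMod (2*m+1)) by norm_num, ← h]
        exact huC'
      · exact hsub ((mem_Ca m 0 (m+m) (by omega)).mpr (Or.inr (by omega)))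
    · -- u = m+a; pair i = a
      refine hpairs a (Finset.mem_Icc.mpr ⟨hapos, by omega⟩) ⟨?_, ?_⟩
      · exact hsub ((mem_Ca m a a (by omega)).mpr (Or.inl (le_refl a)))
      · rw [← h]; exact huC'

lemma Ca_ne (m : ℕ) {i j : ℕ} (hi : i < m) (hj : j < m) (hlt : i < j) :
    Ca m i ≠ Ca m j := by
  intro hij
  have h1 : ((i+1 : ℕ) : ZMod (2*m+1)) ∈ Ca m j :=
    (mem_Ca m j (i+1) (by omega)).mpr (Or.inl (by omega))
  rw [← hij, mem_Ca m i (i+1) (by omega)] at h1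
  omega

lemma Ca_inj (m : ℕ) (hm : 1 ≤ m) : Function.Injective (fun i : Fin m => Ca m i) := by
  intro i j hij
  simp only at hij
  by_contra hne
  rcases Nat.lt_or_ge (i:ℕ) (j:ℕ) with hlt | hge
  · exact Ca_ne m i.isLt j.isLt hlt hij
  · have hlt : (j:ℕ) < (i:ℕ) := by
      rcases Nat.lt_or_ge (j:ℕ) (i:ℕ) with h | h
      · exact h
      · exact absurd (Fin.ext (le_antisymm h hge)) hne
    exact Ca_ne m j.isLt i.isLt hlt hij.symm

end Stmt14Aux

theorem stmt14 (m : ℕ) (hm : 1 ≤ m) :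
    m ≤ {C : Set (ZMod (2 * m + 1)) | SeclusionMaximal (zmodCycle (2 * m + 1)) (fun C =>
        (0 : ZMod (2 * m + 1)) ∈ C ∧
        ((zmodCycle (2 * m + 1)).induce C).Connected ∧
        (openNbhd (zmodCycle (2 * m + 1)) C).ncard ≤ 2 ∧
        ∀ i ∈ Finset.Icc 1 m,
          ¬ (((i : ℕ) : ZMod (2 * m + 1)) ∈ C ∧ (((m + i : ℕ) : ZMod (2 * m + 1)) ∈ C))) C}.ncard := by
  classical
  set S := {C : Set (ZMod (2 * m + 1)) | SeclusionMaximal (zmodCycle (2 * m + 1)) (fun C =>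
        (0 : ZMod (2 * m + 1)) ∈ C ∧
        ((zmodCycle (2 * m + 1)).induce C).Connected ∧
        (openNbhd (zmodCycle (2 * m + 1)) C).ncard ≤ 2 ∧
        ∀ i ∈ Finset.Icc 1 m,
          ¬ (((i : ℕ) : ZMod (2 * m + 1)) ∈ C ∧ (((m + i : ℕ) : ZMod (2 * m + 1)) ∈ C))) C} with hS
  have hmem : ∀ i : Fin m, Stmt14Aux.Ca m i ∈ S := by
    intro i
    constructor
    · exact Stmt14Aux.pr_Ca m i hm i.isLt
    · intro C' hsub hPr
      exact absurd hPr (fun h => Stmt14Aux.no_superset m i hm i.isLt C' hsub h)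
  have hrange : Set.range (fun i : Fin m => Stmt14Aux.Ca m i) ⊆ S := by
    rintro _ ⟨i, rfl⟩; exact hmem i
  have hcard : (Set.range (fun i : Fin m => Stmt14Aux.Ca m i)).ncard = m := by
    rw [← Nat.card_coe_set_eq, Nat.card_range_of_injective (Stmt14Aux.Ca_inj m hm)]
    simp
  calc m = (Set.range (fun i : Fin m => Stmt14Aux.Ca m i)).ncard := hcard.symm
    _ ≤ S.ncard := Set.ncard_le_ncard hrange (Set.toFinite S)
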